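/- C_0 is a monotone under selective incoherent operations: if {K_n} is a finite set of incoherent-preserving matrices with Σ_n K_n† K_n = I, then for every state ρ, writing p_n = Tr[K_n ρ K_n†] and ρ_n = K_n ρ K_n†/p_n for those n with p_n > 0, one has Σ_{n : p_n>0} p_n C_0(ρ_n) ≤ C_0(ρ). -/

import Mathlib

open scoped Matrix ComplexOrder

namespace OneShot

variable {ι κ : Type*} [Fintype ι] [DecidableEq ι] [Fintype κ] [DecidableEq κ]

/-- A quantum state: a positive semidefinite matrix with unit trace. -/
def IsState (ρ : Matrix ι ι ℂ) : Prop := ρ.PosSemidef ∧ ρ.trace = 1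

/-- An incoherent state: a state that is diagonal in the computational basis. -/
def IsIncoherent (ρ : Matrix ι ι ℂ) : Prop := IsState ρ ∧ ρ.IsDiag

/-- The completely dephasing channel `Δ`. -/
def dephase (ρ : Matrix ι ι ℂ) : Matrix ι ι ℂ := Matrix.diagonal fun i => ρ i i

/-- The max-relative entropy of coherence
`C_max(ρ) = min_{δ ∈ 𝓘} D_max(ρ‖δ) = log₂ min {λ ≥ 0 | ∃ δ ∈ 𝓘, ρ ≤ λ δ}`. -/
noncomputable def Cmax (ρ : Matrix ι ι ℂ) : ℝ :=
  Real.logb 2 (sInf {l : ℝ | 0 ≤ l ∧ ∃ δ, IsIncoherent δ ∧ (l • δ - ρ).PosSemidef})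

/-- `C_{Δ,max}(ρ) = log₂ min {λ ≥ 0 | ρ ≤ λ Δ(ρ)}`. -/
noncomputable def CDmax (ρ : Matrix ι ι ℂ) : ℝ :=
  Real.logb 2 (sInf {l : ℝ | 0 ≤ l ∧ (l • dephase ρ - ρ).PosSemidef})

/-- Complete positivity of a linear map on matrices. -/
def CompletelyPositive (Λ : Matrix ι ι ℂ →ₗ[ℂ] Matrix κ κ ℂ) : Prop :=
  ∀ (k : ℕ) (M : Matrix (Fin k × ι) (Fin k × ι) ℂ), M.PosSemidef →
    (Matrix.of fun p q : Fin k × κ =>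
      Λ (Matrix.of fun x y => M (p.1, x) (q.1, y)) p.2 q.2).PosSemidef

/-- Trace preservation. -/
def TracePreserving (Λ : Matrix ι ι ℂ →ₗ[ℂ] Matrix κ κ ℂ) : Prop :=
  ∀ A, (Λ A).trace = A.trace

/-- A maximally incoherent operation (MIO): a CPTP map sending every incoherent state
to an incoherent state. -/
def IsMIO (Λ : Matrix ι ι ℂ →ₗ[ℂ] Matrix κ κ ℂ) : Prop :=
  CompletelyPositive Λ ∧ TracePreserving Λ ∧ ∀ δ, IsIncoherent δ → IsIncoherent (Λ δ)

/-- A dephasing-covariant incoherent operation (DIO): a CPTP map commuting with `Δ`. -/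
def IsDIO (Λ : Matrix ι ι ℂ →ₗ[ℂ] Matrix ι ι ℂ) : Prop :=
  CompletelyPositive Λ ∧ TracePreserving Λ ∧ ∀ ρ, Λ (dephase ρ) = dephase (Λ ρ)

/-- An incoherent-preserving (Kraus) operator: `K δ Kᴴ` is a nonnegative multiple of an
incoherent state, for every incoherent state `δ`. -/
def IncoherentPreserving (K : Matrix κ ι ℂ) : Prop :=
  ∀ δ : Matrix ι ι ℂ, IsIncoherent δ →
    ∃ c : ℝ, 0 ≤ c ∧ ∃ δ' : Matrix κ κ ℂ, IsIncoherent δ' ∧ K * δ * Kᴴ = (c : ℂ) • δ'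

/-- An incoherent operation (IO). -/
def IsIO (Λ : Matrix ι ι ℂ →ₗ[ℂ] Matrix κ κ ℂ) : Prop :=
  ∃ (N : ℕ) (K : Fin N → Matrix κ ι ℂ),
    (∀ n, IncoherentPreserving (K n)) ∧ (∑ n, (K n)ᴴ * K n = 1) ∧
    ∀ ρ, Λ ρ = ∑ n, K n * ρ * (K n)ᴴ

/-- A strictly incoherent operation (SIO). -/
def IsSIO (Λ : Matrix ι ι ℂ →ₗ[ℂ] Matrix κ κ ℂ) : Prop :=
  ∃ (N : ℕ) (K : Fin N → Matrix κ ι ℂ),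
    (∀ n, IncoherentPreserving (K n)) ∧ (∀ n, IncoherentPreserving (K n)ᴴ) ∧
    (∑ n, (K n)ᴴ * K n = 1) ∧ ∀ ρ, Λ ρ = ∑ n, K n * ρ * (K n)ᴴ

/-- The outer product `|ψ⟩⟨ψ|`. -/
def outer (ψ : ι → ℂ) : Matrix ι ι ℂ := Matrix.of fun i j => ψ i * star (ψ j)

/-- `T ψ` is the number of nonzero computational-basis coefficients of `ψ`. -/
noncomputable def T (ψ : ι → ℂ) : ℕ := (Finset.univ.filter fun i => ψ i ≠ 0).card

/-- A finite pure-state decomposition `ρ = Σ_j p_j |ψ_j⟩⟨ψ_j|`. -/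
def IsDecomposition (ρ : Matrix ι ι ℂ) (n : ℕ) (p : Fin n → ℝ) (ψ : Fin n → ι → ℂ) : Prop :=
  (∀ j, 0 < p j) ∧ (∑ j, p j = 1) ∧ (∀ j, ∑ i, Complex.normSq (ψ j i) = 1) ∧
    ρ = ∑ j, p j • outer (ψ j)

/-- `C_0(ρ) = min over decompositions of max_j log₂ T(ψ_j)`. -/
noncomputable def C0 (ρ : Matrix ι ι ℂ) : ℝ :=
  sInf { r | ∃ n p ψ, IsDecomposition ρ n p ψ ∧
    r = Real.logb 2 (↑(Finset.univ.sup fun j => T (ψ j)) : ℝ) }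

/-- Matrix square root of a positive semidefinite matrix (junk value `0` elsewhere). -/
noncomputable def msqrt (A : Matrix ι ι ℂ) : Matrix ι ι ℂ :=
  letI := Classical.propDecidable A.PosSemidef
  if h : A.PosSemidef then
    (h.1.eigenvectorUnitary : Matrix ι ι ℂ) *
      Matrix.diagonal ((↑) ∘ (Real.sqrt ∘ h.1.eigenvalues)) *
      (star h.1.eigenvectorUnitary : Matrix ι ι ℂ)
  else 0

/-- Uhlmann fidelity `F(ρ,σ) = (Tr √(√ρ σ √ρ))²`. -/
noncomputable def Fid (ρ σ : Matrix ι ι ℂ) : ℝ :=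
  ((msqrt (msqrt ρ * σ * msqrt ρ)).trace.re) ^ 2

/-- Smoothed `C_max`. -/
noncomputable def Cmaxeps (ρ : Matrix ι ι ℂ) (ε : ℝ) : ℝ :=
  sInf { r | ∃ ρ', IsState ρ' ∧ 1 - ε ≤ Fid ρ ρ' ∧ r = Cmax ρ' }

/-- Smoothed `C_{Δ,max}`. -/
noncomputable def CDmaxeps (ρ : Matrix ι ι ℂ) (ε : ℝ) : ℝ :=
  sInf { r | ∃ ρ', IsState ρ' ∧ 1 - ε ≤ Fid ρ ρ' ∧ r = CDmax ρ' }

/-- Smoothed `C_0`. -/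
noncomputable def C0eps (ρ : Matrix ι ι ℂ) (ε : ℝ) : ℝ :=
  sInf { r | ∃ ρ', IsState ρ' ∧ 1 - ε ≤ Fid ρ ρ' ∧ r = C0 ρ' }

/-- The maximally coherent state `Ψ_M = |Ψ_M⟩⟨Ψ_M|` of dimension `M`. -/
noncomputable def PsiM (M : ℕ) : Matrix (Fin M) (Fin M) ℂ := Matrix.of fun _ _ => (1 : ℂ) / M

/-- One-shot coherence cost under MIO. -/
noncomputable def CMIOeps (ρ : Matrix ι ι ℂ) (ε : ℝ) : ℝ :=
  sInf { r | ∃ M : ℕ, 1 ≤ M ∧ r = Real.logb 2 M ∧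
    ∃ Λ : Matrix (Fin M) (Fin M) ℂ →ₗ[ℂ] Matrix ι ι ℂ, IsMIO Λ ∧ 1 - ε ≤ Fid ρ (Λ (PsiM M)) }

/-- One-shot coherence cost under DIO. -/
noncomputable def CDIOeps (ρ : Matrix ι ι ℂ) (ε : ℝ) : ℝ :=
  sInf { r | ∃ M : ℕ, 1 ≤ M ∧ r = Real.logb 2 M ∧
    ∃ Λ : Matrix (Fin M) (Fin M) ℂ →ₗ[ℂ] Matrix ι ι ℂ,
      CompletelyPositive Λ ∧ TracePreserving Λ ∧ (∀ ω, Λ (dephase ω) = dephase (Λ ω)) ∧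
      1 - ε ≤ Fid ρ (Λ (PsiM M)) }

/-- One-shot coherence cost under IO. -/
noncomputable def CIOeps (ρ : Matrix ι ι ℂ) (ε : ℝ) : ℝ :=
  sInf { r | ∃ M : ℕ, 1 ≤ M ∧ r = Real.logb 2 M ∧
    ∃ Λ : Matrix (Fin M) (Fin M) ℂ →ₗ[ℂ] Matrix ι ι ℂ, IsIO Λ ∧ 1 - ε ≤ Fid ρ (Λ (PsiM M)) }

/-- One-shot coherence cost under SIO. -/
noncomputable def CSIOeps (ρ : Matrix ι ι ℂ) (ε : ℝ) : ℝ :=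
  sInf { r | ∃ M : ℕ, 1 ≤ M ∧ r = Real.logb 2 M ∧
    ∃ Λ : Matrix (Fin M) (Fin M) ℂ →ₗ[ℂ] Matrix ι ι ℂ, IsSIO Λ ∧ 1 - ε ≤ Fid ρ (Λ (PsiM M)) }

/-- Matrix logarithm (base 2) via the spectral decomposition, with `log₂ 0 = 0` junk
convention on the kernel, and junk value `0` on non-Hermitian matrices. -/
noncomputable def mlog2 (A : Matrix ι ι ℂ) : Matrix ι ι ℂ :=
  letI := Classical.propDecidable A.IsHermitian
  if h : A.IsHermitian then
    (h.eigenvectorUnitary : Matrix ι ι ℂ) *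
      Matrix.diagonal (fun i => (Real.logb 2 (h.eigenvalues i) : ℂ)) *
      (h.eigenvectorUnitary : Matrix ι ι ℂ)ᴴ
  else 0

/-- The relative entropy of coherence `C_r(ρ) = min_{δ ∈ 𝓘} S(ρ‖δ)`, where the minimum
is (equivalently) restricted to those `δ` whose support contains the support of `ρ`,
on which `S(ρ‖δ) = Tr[ρ (log₂ ρ − log₂ δ)]` is finite. -/
noncomputable def Cr (ρ : Matrix ι ι ℂ) : ℝ :=
  sInf { r | ∃ δ, IsIncoherent δ ∧ (∀ v : ι → ℂ, δ.mulVec v = 0 → ρ.mulVec v = 0) ∧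
    r = ((ρ * (mlog2 ρ - mlog2 δ)).trace).re }

/-- Von Neumann entropy (base 2). -/
noncomputable def vN (σ : Matrix ι ι ℂ) : ℝ := -((σ * mlog2 σ).trace.re)

/-- The coherence of formation. -/
noncomputable def Cf (ρ : Matrix ι ι ℂ) : ℝ :=
  sInf { r | ∃ n p ψ, IsDecomposition ρ n p ψ ∧
    r = ∑ j, p j * vN (dephase (outer (ψ j))) }

/-- The set `A_ρ = { (1/t)[(1+t)Δ(ρ) − ρ] : t > 0, (1+t)Δ(ρ) − ρ ≥ 0 }`. -/
def Aset (ρ : Matrix ι ι ℂ) : Set (Matrix ι ι ℂ) :=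
  { σ | ∃ t : ℝ, 0 < t ∧ ((1 + t) • dephase ρ - ρ).PosSemidef ∧
      σ = t⁻¹ • ((1 + t) • dephase ρ - ρ) }

/-- The `n`-fold tensor power `ρ^{⊗ n}`. -/
def tpow (ρ : Matrix ι ι ℂ) (n : ℕ) : Matrix (Fin n → ι) (Fin n → ι) ℂ :=
  Matrix.of fun i j => ∏ t, ρ (i t) (j t)


/-! ### Auxiliary lemmas for STATEMENT 8 -/

lemma outer_mul_conjTranspose (K : Matrix κ ι ℂ) (ψ : ι → ℂ) :
    K * outer ψ * Kᴴ = outer (K.mulVec ψ) := by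
  ext a b
  simp only [Matrix.mul_apply, outer, Matrix.of_apply, Matrix.conjTranspose_apply,
    Matrix.mulVec, dotProduct, star_sum, Finset.mul_sum, Finset.sum_mul, star_mul']
  exact Finset.sum_congr rfl fun y _ => Finset.sum_congr rfl fun x _ => by ring

lemma col_sparse {K : Matrix κ ι ℂ} (hK : IncoherentPreserving K)
    (i : ι) (a b : κ) (ha : K a i ≠ 0) (hb : K b i ≠ 0) : a = b := by
  by_contra hab
  have hdel : IsIncoherent (Matrix.diagonal (fun j => if j = i then (1:ℂ) else 0)) := by
    refine ⟨⟨Matrix.PosSemidef.diagonal ?_, ?_⟩, Matrix.isDiag_diagonal _⟩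
    · intro j; dsimp only; split <;> simp
    · simp [Matrix.trace_diagonal]
  obtain ⟨c, _, δ', ⟨_, hdiag⟩, heq⟩ := hK _ hdel
  have h1 : (K * Matrix.diagonal (fun j => if j = i then (1:ℂ) else 0) * Kᴴ) a b
      = K a i * star (K b i) := by
    simp [Matrix.mul_apply, Matrix.diagonal, Matrix.conjTranspose_apply, mul_ite,
      Finset.sum_ite_eq', Finset.mul_sum]
  rw [heq] at h1
  have h2 : δ' a b = 0 := hdiag hab
  rw [Matrix.smul_apply, h2, smul_zero] at h1
  exact mul_ne_zero ha (star_ne_zero.mpr hb) h1.symm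

lemma T_mulVec_le (K : Matrix κ ι ℂ) (hcol : ∀ i a b, K a i ≠ 0 → K b i ≠ 0 → a = b)
    (ψ : ι → ℂ) : T (K.mulVec ψ) ≤ T ψ := by
  classical
  by_cases hψ : ∃ i, ψ i ≠ 0
  · obtain ⟨i₀, -⟩ := hψ
    apply Finset.card_le_card_of_injOn
      (fun a => if h : ∃ i, K a i * ψ i ≠ 0 then h.choose else i₀)
    · intro a ha
      simp only [Finset.mem_coe, Finset.mem_filter, Finset.mem_univ, true_and] at ha ⊢
      have h : ∃ i, K a i * ψ i ≠ 0 := by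
        by_contra h; push_neg at h
        exact ha (by simp [Matrix.mulVec, dotProduct, h])
      rw [dif_pos h]
      exact right_ne_zero_of_mul h.choose_spec
    · intro a ha b hb hab
      simp only [Finset.coe_filter, Set.mem_setOf_eq] at ha hb
      have hA : ∃ i, K a i * ψ i ≠ 0 := by
        by_contra h; push_neg at h
        exact ha.2 (by simp [Matrix.mulVec, dotProduct, h])
      have hB : ∃ i, K b i * ψ i ≠ 0 := by
        by_contra h; push_neg at h
        exact hb.2 (by simp [Matrix.mulVec, dotProduct, h])
      simp only [dif_pos hA, dif_pos hB] at hab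
      refine hcol hA.choose a b (left_ne_zero_of_mul hA.choose_spec) ?_
      rw [hab]; exact left_ne_zero_of_mul hB.choose_spec
  · push_neg at hψ
    have : ψ = 0 := funext fun i => hψ i
    subst this
    simp [T, Matrix.mulVec_zero]

lemma T_smul (c : ℝ) (hc : c ≠ 0) (v : ι → ℂ) : T (fun a => (c:ℂ) * v a) = T v := by
  unfold T
  congr 1
  apply Finset.filter_congr
  intro i _
  simp [mul_ne_zero_iff, hc, Complex.ofReal_ne_zero]

lemma sum_equivFin {α M : Type*} [AddCommMonoid M] (s : Finset α) (f : α → M) :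
    ∑ j : Fin s.card, f (s.equivFin.symm j) = ∑ x ∈ s, f x := by
  rw [← Finset.sum_coe_sort s f]
  exact Fintype.sum_equiv s.equivFin.symm _ _ (fun j => rfl)

lemma trace_outer (v : ι → ℂ) :
    (outer v).trace = ((∑ a, Complex.normSq (v a) : ℝ) : ℂ) := by
  simp only [Matrix.trace, Matrix.diag, outer, Matrix.of_apply]
  push_cast
  exact Finset.sum_congr rfl fun a _ => (Complex.mul_conj (v a))

lemma exists_decomposition (ρ : Matrix ι ι ℂ) (hρ : IsState ρ) :
    ∃ n p ψ, IsDecomposition ρ n p ψ := by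
  classical
  obtain ⟨hpsd, htr⟩ := hρ
  set h : ρ.IsHermitian := hpsd.1 with hh
  set lam := h.eigenvalues with hlam
  set U : Matrix ι ι ℂ := (h.eigenvectorUnitary : Matrix ι ι ℂ) with hU
  set u : ι → ι → ℂ := fun i a => U a i with hu
  have hUU : Uᴴ * U = 1 := by
    simpa [hU, Matrix.star_eq_conjTranspose] using
      Unitary.coe_star_mul_self h.eigenvectorUnitary
  have hnorm : ∀ i, ∑ a, Complex.normSq (u i a) = 1 := by
    intro i
    have := congrFun (congrFun hUU i) i
    simp only [Matrix.mul_apply, Matrix.conjTranspose_apply, Matrix.one_apply_eq] at this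
    have : ((∑ a, Complex.normSq (u i a) : ℝ) : ℂ) = 1 := by
      push_cast
      rw [← this]
      exact Finset.sum_congr rfl fun a _ =>
        ((Complex.mul_conj (U a i)).symm.trans (mul_comm _ _))
    exact_mod_cast this
  have hspec : ρ = ∑ i, lam i • outer (u i) := by
    conv_lhs => rw [h.spectral_theorem, Unitary.conjStarAlgAut_apply]
    ext a b
    simp only [Matrix.mul_apply, Matrix.diagonal, Matrix.of_apply, Function.comp,
      Finset.sum_apply, Matrix.smul_apply, outer, Matrix.star_eq_conjTranspose,
      Matrix.conjTranspose_apply, mul_ite, mul_zero, ite_mul, zero_mul,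
      Matrix.sum_apply, Finset.sum_ite_eq, Finset.sum_ite_eq', Finset.mem_univ, if_true]
    refine Finset.sum_congr rfl fun i _ => ?_
    show (h.eigenvectorUnitary : Matrix ι ι ℂ) a i * ((h.eigenvalues i : ℝ) : ℂ) *
        (starRingEnd ℂ) ((h.eigenvectorUnitary : Matrix ι ι ℂ) b i) =
      (h.eigenvalues i : ℝ) • ((h.eigenvectorUnitary : Matrix ι ι ℂ) a i *
        (starRingEnd ℂ) ((h.eigenvectorUnitary : Matrix ι ι ℂ) b i))
    rw [Complex.real_smul]
    ring
  have hsumlam : ∑ i, lam i = 1 := by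
    have h1 : ρ.trace = ∑ i, (lam i : ℂ) := by
      conv_lhs => rw [h.spectral_theorem, Unitary.conjStarAlgAut_apply]
      rw [Matrix.trace_mul_cycle, Matrix.star_eq_conjTranspose, hUU, one_mul,
        Matrix.trace_diagonal]
      simp [Function.comp, hlam]
    rw [htr] at h1
    exact_mod_cast h1.symm
  have hnn : ∀ i, 0 ≤ lam i := fun i => hpsd.eigenvalues_nonneg i
  set s := Finset.univ.filter (fun i => 0 < lam i) with hs
  refine ⟨s.card, fun j => lam (s.equivFin.symm j), fun j => u (s.equivFin.symm j),
    ?_, ?_, fun j => hnorm _, ?_⟩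
  · intro j
    have := (s.equivFin.symm j).2
    simp only [hs, Finset.mem_filter] at this
    exact this.2
  · rw [sum_equivFin s lam, ← hsumlam]
    exact Finset.sum_filter_of_ne (fun i _ hne => (hnn i).lt_of_ne (Ne.symm hne))
  · rw [sum_equivFin s (fun i => lam i • outer (u i)), hspec]
    symm
    apply Finset.sum_subset (Finset.subset_univ s)
    intro i _ hi
    simp only [hs, Finset.mem_filter, Finset.mem_univ, true_and, not_lt] at hi
    have : lam i = 0 := le_antisymm hi (hnn i)
    simp [this]

lemma one_le_T {v : ι → ℂ} (h : ∑ i, Complex.normSq (v i) = 1) : 1 ≤ T v := by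
  by_contra hlt
  push_neg at hlt
  have h0 : T v = 0 := Nat.lt_one_iff.mp hlt
  rw [T, Finset.card_eq_zero, Finset.filter_eq_empty_iff] at h0
  have hz : ∀ i, v i = 0 := fun i => not_not.mp (h0 (Finset.mem_univ i))
  have hz0 : ∑ i, Complex.normSq (v i) = 0 :=
    Finset.sum_eq_zero fun i _ => by rw [hz i, Complex.normSq_zero]
  rw [hz0] at h
  exact one_ne_zero h.symm

lemma one_le_supT {ρ : Matrix ι ι ℂ} {n : ℕ} {p : Fin n → ℝ} {ψ : Fin n → ι → ℂ}
    (h : IsDecomposition ρ n p ψ) : 1 ≤ Finset.univ.sup fun j => T (ψ j) := by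
  obtain ⟨hp, hsum, hnorm, -⟩ := h
  have hn : 0 < n := by
    rcases Nat.eq_zero_or_pos n with h0 | h0
    · subst h0; simp at hsum
    · exact h0
  exact le_trans (one_le_T (hnorm ⟨0, hn⟩))
    (Finset.le_sup (f := fun j => T (ψ j)) (Finset.mem_univ (⟨0, hn⟩ : Fin n)))

lemma C0_set_nonneg {ρ : Matrix ι ι ℂ} :
    ∀ r ∈ { r | ∃ n p ψ, IsDecomposition ρ n p ψ ∧
      r = Real.logb 2 (↑(Finset.univ.sup fun j => T (ψ j)) : ℝ) }, 0 ≤ r := by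
  rintro r ⟨n, p, ψ, hd, rfl⟩
  apply Real.logb_nonneg one_lt_two
  exact_mod_cast one_le_supT hd

/-- `C_0` is a monotone under selective incoherent operations:
`Σ_{n : p_n > 0} p_n C_0(K_n ρ K_n† / p_n) ≤ C_0(ρ)`. -/
theorem C0_selective_monotone {d : ℕ} (N : ℕ) (K : Fin N → Matrix (Fin d) (Fin d) ℂ)
    (hK : ∀ n, IncoherentPreserving (K n)) (hsum : ∑ n, (K n)ᴴ * K n = 1)
    (ρ : Matrix (Fin d) (Fin d) ℂ) (hρ : IsState ρ) :
    ∑ n ∈ Finset.univ.filter (fun n => 0 < (K n * ρ * (K n)ᴴ).trace.re),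
      (K n * ρ * (K n)ᴴ).trace.re *
        C0 ((((K n * ρ * (K n)ᴴ).trace.re)⁻¹ : ℝ) • (K n * ρ * (K n)ᴴ)) ≤ C0 ρ := by
  classical
  obtain ⟨n₀, p₀, ψ₀, hd₀⟩ := exists_decomposition ρ hρ
  refine le_csInf ⟨_, ⟨n₀, p₀, ψ₀, hd₀, rfl⟩⟩ ?_
  rintro r ⟨m, p, ψ, hdec, rfl⟩
  set M := Finset.univ.sup fun j => T (ψ j) with hM
  have hM1 : 1 ≤ M := one_le_supT hdec
  have hlogM : 0 ≤ Real.logb 2 M := Real.logb_nonneg one_lt_two (by exact_mod_cast hM1)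
  obtain ⟨hp, hpsum, hψnorm, hρeq⟩ := hdec
  set v : Fin N → Fin m → Fin d → ℂ := fun n j => (K n).mulVec (ψ j) with hv
  set Nf : Fin N → Fin m → ℝ := fun n j => ∑ a, Complex.normSq (v n j a) with hNf
  have hNfnn : ∀ n j, 0 ≤ Nf n j :=
    fun n j => Finset.sum_nonneg fun a _ => Complex.normSq_nonneg _
  have hKρ : ∀ n, K n * ρ * (K n)ᴴ = ∑ j, p j • outer (v n j) := by
    intro n
    rw [hρeq]
    rw [Finset.mul_sum, Finset.sum_mul]
    refine Finset.sum_congr rfl fun j _ => ?_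
    rw [Matrix.mul_smul, Matrix.smul_mul, outer_mul_conjTranspose]
  have hPn : ∀ n, (K n * ρ * (K n)ᴴ).trace.re = ∑ j, p j * Nf n j := by
    intro n
    rw [hKρ n, Matrix.trace_sum, Complex.re_sum]
    refine Finset.sum_congr rfl fun j _ => ?_
    rw [Matrix.trace_smul, trace_outer, Complex.real_smul, ← Complex.ofReal_mul,
      Complex.ofReal_re]
  have hPnn : ∀ n, 0 ≤ (K n * ρ * (K n)ᴴ).trace.re := by
    intro n
    rw [hPn n]
    exact Finset.sum_nonneg fun j _ => mul_nonneg (hp j).le (hNfnn n j)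
  have htot : ∑ n, (K n * ρ * (K n)ᴴ).trace.re = 1 := by
    have h1 : ∑ n, (K n * ρ * (K n)ᴴ).trace = 1 := by
      calc ∑ n, (K n * ρ * (K n)ᴴ).trace = ∑ n, ((K n)ᴴ * (K n) * ρ).trace :=
            Finset.sum_congr rfl fun n _ => Matrix.trace_mul_cycle _ _ _
        _ = ((∑ n, (K n)ᴴ * K n) * ρ).trace := by rw [Finset.sum_mul, Matrix.trace_sum]
        _ = 1 := by rw [hsum, one_mul, hρ.2]
    rw [← Complex.re_sum, h1, Complex.one_re]
  have key : ∀ n : Fin N, 0 < (K n * ρ * (K n)ᴴ).trace.re →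
      C0 ((((K n * ρ * (K n)ᴴ).trace.re)⁻¹ : ℝ) • (K n * ρ * (K n)ᴴ)) ≤ Real.logb 2 M := by
    intro n hPpos
    set P := (K n * ρ * (K n)ᴴ).trace.re with hPdef
    set s := Finset.univ.filter (fun j => v n j ≠ 0) with hs
    set e : Fin s.card → Fin m := fun j => (s.equivFin.symm j : Fin m) with he
    have hmem : ∀ j : Fin s.card, e j ∈ s := fun j => (s.equivFin.symm j).2
    have hvne : ∀ j : Fin s.card, v n (e j) ≠ 0 :=
      fun j => (Finset.mem_filter.mp (hmem j)).2
    have hNpos : ∀ j : Fin s.card, 0 < Nf n (e j) := by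
      intro j
      obtain ⟨a, ha⟩ : ∃ a, v n (e j) a ≠ 0 := by
        by_contra hc; push_neg at hc; exact hvne j (funext hc)
      exact Finset.sum_pos' (fun a _ => Complex.normSq_nonneg _)
        ⟨a, Finset.mem_univ a, Complex.normSq_pos.mpr ha⟩
    set q : Fin s.card → ℝ := fun j => P⁻¹ * (p (e j) * Nf n (e j)) with hq
    set φ : Fin s.card → Fin d → ℂ :=
      fun j a => ((((Real.sqrt (Nf n (e j)))⁻¹ : ℝ)) : ℂ) * v n (e j) a with hφ
    have hPs : ∑ x ∈ s, p x * Nf n x = P := by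
      rw [hPdef, hPn n]
      refine Finset.sum_filter_of_ne fun j _ hne => ?_
      intro h0
      apply hne
      have hN0 : Nf n j = 0 := by
        rw [hNf]
        dsimp only
        rw [h0]
        simp
      rw [hN0, mul_zero]
    have hdecomp : IsDecomposition (P⁻¹ • (K n * ρ * (K n)ᴴ)) s.card q φ := by
      refine ⟨?_, ?_, ?_, ?_⟩
      · intro j
        exact mul_pos (inv_pos.mpr hPpos) (mul_pos (hp _) (hNpos j))
      · simp only [hq]
        rw [← Finset.mul_sum]
        rw [show (∑ j : Fin s.card, p (e j) * Nf n (e j))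
            = ∑ x ∈ s, p x * Nf n x from sum_equivFin s (fun x => p x * Nf n x)]
        rw [hPs, inv_mul_cancel₀ (ne_of_gt hPpos)]
      · intro j
        have hcc : (Real.sqrt (Nf n (e j)))⁻¹ * (Real.sqrt (Nf n (e j)))⁻¹
            = (Nf n (e j))⁻¹ := by
          rw [← mul_inv, Real.mul_self_sqrt (hNpos j).le]
        have hstep : ∀ a, Complex.normSq (φ j a)
            = (Nf n (e j))⁻¹ * Complex.normSq (v n (e j) a) := by
          intro a
          simp only [hφ]
          rw [Complex.normSq_mul, Complex.normSq_ofReal, hcc]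
        rw [Finset.sum_congr rfl (fun a _ => hstep a), ← Finset.mul_sum]
        exact inv_mul_cancel₀ (ne_of_gt (hNpos j))
      · symm
        have houter : ∀ j : Fin s.card,
            q j • outer (φ j) = (P⁻¹ * p (e j)) • outer (v n (e j)) := by
          intro j
          have hcc : ((((Real.sqrt (Nf n (e j)))⁻¹ : ℝ)) : ℂ) *
              ((((Real.sqrt (Nf n (e j)))⁻¹ : ℝ)) : ℂ) = (((Nf n (e j))⁻¹ : ℝ) : ℂ) := by
            rw [← Complex.ofReal_mul, ← mul_inv, Real.mul_self_sqrt (hNpos j).le]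
          have h1 : outer (φ j) = (Nf n (e j))⁻¹ • outer (v n (e j)) := by
            ext a b
            simp only [outer, Matrix.of_apply, Matrix.smul_apply, hφ, star_mul',
              Complex.star_def, Complex.conj_ofReal, Complex.real_smul]
            linear_combination (v n (e j) a * (starRingEnd ℂ) (v n (e j) b)) * hcc
          rw [h1, smul_smul]
          simp only [hq]
          rw [mul_assoc, mul_inv_cancel_right₀ (ne_of_gt (hNpos j))]
        calc ∑ j, q j • outer (φ j)
            = ∑ j : Fin s.card, (P⁻¹ * p (e j)) • outer (v n (e j)) :=
              Finset.sum_congr rfl fun j _ => houter j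
          _ = ∑ x ∈ s, (P⁻¹ * p x) • outer (v n x) :=
              sum_equivFin s (fun x => (P⁻¹ * p x) • outer (v n x))
          _ = ∑ x, (P⁻¹ * p x) • outer (v n x) := by
              apply Finset.sum_subset (Finset.subset_univ s)
              intro x _ hx
              simp only [hs, Finset.mem_filter, Finset.mem_univ, true_and, not_not] at hx
              have h0 : outer (v n x) = 0 := by ext a b; simp [outer, hx]
              rw [h0, smul_zero]
          _ = P⁻¹ • (K n * ρ * (K n)ᴴ) := by
              rw [hKρ n, Finset.smul_sum]
              exact Finset.sum_congr rfl fun x _ => by rw [smul_smul]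
    have hC0le : C0 (P⁻¹ • (K n * ρ * (K n)ᴴ)) ≤
        Real.logb 2 ((Finset.univ.sup fun j => T (φ j) : ℕ) : ℝ) :=
      csInf_le ⟨0, fun r hr => C0_set_nonneg r hr⟩ ⟨s.card, q, φ, hdecomp, rfl⟩
    refine le_trans hC0le ?_
    have hsupφ : (Finset.univ.sup fun j => T (φ j)) ≤ M := by
      apply Finset.sup_le
      intro j _
      have hTeq : T (φ j) = T (v n (e j)) := by
        simp only [hφ]
        exact T_smul _ (inv_ne_zero (Real.sqrt_ne_zero'.mpr (hNpos j))) _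
      rw [hTeq, hv]
      exact le_trans
        (T_mulVec_le (K n) (fun i a b hia hib => col_sparse (hK n) i a b hia hib) (ψ (e j)))
        (Finset.le_sup (f := fun j => T (ψ j)) (Finset.mem_univ (e j)))
    have h1φ : 1 ≤ (Finset.univ.sup fun j => T (φ j)) := one_le_supT hdecomp
    refine (Real.logb_le_logb one_lt_two (by exact_mod_cast h1φ) ?_).mpr (by exact_mod_cast hsupφ)
    exact_mod_cast lt_of_lt_of_le Nat.zero_lt_one hM1
  calc ∑ n ∈ Finset.univ.filter (fun n => 0 < (K n * ρ * (K n)ᴴ).trace.re),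
        (K n * ρ * (K n)ᴴ).trace.re *
          C0 ((((K n * ρ * (K n)ᴴ).trace.re)⁻¹ : ℝ) • (K n * ρ * (K n)ᴴ))
      ≤ ∑ n ∈ Finset.univ.filter (fun n => 0 < (K n * ρ * (K n)ᴴ).trace.re),
        (K n * ρ * (K n)ᴴ).trace.re * Real.logb 2 M := by
        refine Finset.sum_le_sum fun n hn => ?_
        have hpos := (Finset.mem_filter.mp hn).2
        exact mul_le_mul_of_nonneg_left (key n hpos) hpos.le
    _ = (∑ n ∈ Finset.univ.filter (fun n => 0 < (K n * ρ * (K n)ᴴ).trace.re),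
        (K n * ρ * (K n)ᴴ).trace.re) * Real.logb 2 M := (Finset.sum_mul _ _ _).symm
    _ ≤ 1 * Real.logb 2 M := by
        refine mul_le_mul_of_nonneg_right ?_ hlogM
        rw [← htot]
        exact Finset.sum_le_sum_of_subset_of_nonneg (Finset.filter_subset _ _)
          (fun n _ _ => hPnn n)
    _ = Real.logb 2 M := one_mul _


end OneShot
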